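/- Let a, b, c > 0 and r, s ≥ 0. If (U1, U2) has the bivariate generalised beta type I density with parameters a, b, c, then E(U1^r U2^s) = (B(a+r, b+c) B(b+s, a+c) / β*(a,b,c)) · Σ_{t=0}^∞ ((a+r)_t (b+s)_t (a+b+c)_t) / ((a+b+c+r)_t (a+b+c+s)_t t!), where β*(a,b,c) = Γ(a)Γ(b)Γ(c)/Γ(a+b+c) and the series is the 3F2 hypergeometric series evaluated at 1. -/

import Mathlib

open MeasureTheory Real Set

lemma poch_succ (x : ℝ) (t : ℕ) :
    (ascPochhammer ℝ (t+1)).eval x = (ascPochhammer ℝ t).eval x * (x + t) := by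
  simp [ascPochhammer_succ_right]

lemma poch_pos {x : ℝ} (hx : 0 < x) (t : ℕ) : 0 < (ascPochhammer ℝ t).eval x := by
  induction t with
  | zero => simp
  | succ n ih => rw [poch_succ]; positivity

lemma gamma_poch {x : ℝ} (hx : 0 < x) (t : ℕ) :
    Real.Gamma (x + t) = Real.Gamma x * (ascPochhammer ℝ t).eval x := by
  induction t with
  | zero => simp
  | succ n ih =>
    have h1 : x + (n+1:ℕ) = (x + n) + 1 := by push_cast; ring
    rw [h1, Real.Gamma_add_one (by positivity), ih, poch_succ]; ring

lemma beta_integrableOn {u v : ℝ} (hu : 0 < u) (hv : 0 < v) :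
    IntegrableOn (fun x : ℝ => x ^ (u - 1) * (1 - x) ^ (v - 1)) (Set.Ioo 0 1) := by
  have h := (Complex.betaIntegral_convergent (u := u) (v := v) (by simpa) (by simpa)).1
  have h2 := (h.mono_set Set.Ioo_subset_Ioc_self).norm
  refine MeasureTheory.IntegrableOn.congr_fun h2 (fun x hx => ?_) measurableSet_Ioo
  obtain ⟨hx0, hx1⟩ := hx
  rw [norm_mul]
  rw [show ((1:ℂ) - x) = ((1 - x : ℝ) : ℂ) by push_cast; ring]
  rw [show ((u:ℂ) - 1) = ((u - 1 : ℝ) : ℂ) by push_cast; ring]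
  rw [show ((v:ℂ) - 1) = ((v - 1 : ℝ) : ℂ) by push_cast; ring]
  rw [Complex.norm_cpow_eq_rpow_re_of_pos hx0,
    Complex.norm_cpow_eq_rpow_re_of_pos (by linarith)]
  simp

lemma beta_integral_eq {u v : ℝ} (hu : 0 < u) (hv : 0 < v) :
    ∫ x in Set.Ioo (0:ℝ) 1, x ^ (u - 1) * (1 - x) ^ (v - 1)
      = Real.Gamma u * Real.Gamma v / Real.Gamma (u + v) := by
  have key := Complex.Gamma_mul_Gamma_eq_betaIntegral
    (s := u) (t := v) (by simpa) (by simpa)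
  have hbeta : Complex.betaIntegral u v
      = ((∫ x in Set.Ioo (0:ℝ) 1, x ^ (u - 1) * (1 - x) ^ (v - 1) : ℝ) : ℂ) := by
    rw [Complex.betaIntegral, intervalIntegral.integral_of_le zero_le_one,
      MeasureTheory.integral_Ioc_eq_integral_Ioo]
    rw [show ((∫ x in Set.Ioo (0:ℝ) 1, x ^ (u - 1) * (1 - x) ^ (v - 1) : ℝ) : ℂ)
        = ∫ x in Set.Ioo (0:ℝ) 1, ((x ^ (u - 1) * (1 - x) ^ (v - 1) : ℝ) : ℂ) from
      (integral_ofReal).symm]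
    refine setIntegral_congr_fun measurableSet_Ioo (fun x hx => ?_)
    obtain ⟨hx0, hx1⟩ := hx
    rw [Complex.ofReal_mul, Complex.ofReal_cpow hx0.le,
      Complex.ofReal_cpow (by linarith : (0:ℝ) ≤ 1 - x)]
    push_cast
    ring
  rw [hbeta] at key
  have huv : (0:ℝ) < Real.Gamma (u + v) := Real.Gamma_pos_of_pos (by linarith)
  have key2 : ((Real.Gamma u * Real.Gamma v : ℝ) : ℂ)
      = ((Real.Gamma (u+v) * ∫ x in Set.Ioo (0:ℝ) 1, x ^ (u - 1) * (1 - x) ^ (v - 1) : ℝ) : ℂ) := by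
    push_cast
    rw [← Complex.Gamma_ofReal, ← Complex.Gamma_ofReal, ← Complex.Gamma_ofReal] at *
    rw [key]; push_cast; ring
  have := Complex.ofReal_injective key2
  field_simp
  linarith [this]



lemma binomial_hasSum {d z : ℝ} (hd : 0 < d) (hz0 : 0 ≤ z) (hz1 : z < 1) :
    HasSum (fun t : ℕ => (ascPochhammer ℝ t).eval d / t.factorial * z ^ t)
      ((1 - z) ^ (-d)) := by
  have h1z : 0 < 1 - z := by linarith
  set a : ℕ → ℝ := fun t => z ^ t / t.factorial * Real.Gamma (d + t) with ha
  have hanonneg : ∀ t, 0 ≤ a t := fun t => by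
    have := Real.Gamma_pos_of_pos (show (0:ℝ) < d + t by positivity)
    positivity
  -- each term as a lintegral
  have step1 : ∀ t : ℕ, ENNReal.ofReal (a t)
      = ∫⁻ u in Ioi (0:ℝ), ENNReal.ofReal (z ^ t / t.factorial * (exp (-u) * u ^ (d + t - 1))) := by
    intro t
    have hdt : (0:ℝ) < d + t := by positivity
    have hint : IntegrableOn (fun u : ℝ => z ^ t / t.factorial * (exp (-u) * u ^ (d + t - 1)))
        (Ioi 0) := (Real.GammaIntegral_convergent hdt).const_mul _
    rw [ha]
    have : a t = ∫ u in Ioi (0:ℝ), z ^ t / t.factorial * (exp (-u) * u ^ (d + t - 1)) := by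
      rw [integral_const_mul, ← Real.Gamma_eq_integral hdt, ha]
    rw [← ha, this]
    refine MeasureTheory.ofReal_integral_eq_lintegral_ofReal hint ?_
    filter_upwards [ae_restrict_mem measurableSet_Ioi] with u hu
    have hu0 : (0:ℝ) < u := hu
    positivity
  -- swap sum and lintegral
  have meas : ∀ t : ℕ, AEMeasurable
      (fun u : ℝ => ENNReal.ofReal (z ^ t / t.factorial * (exp (-u) * u ^ (d + t - 1))))
      (volume.restrict (Ioi 0)) := by
    intro t
    refine (Measurable.ennreal_ofReal ?_).aemeasurable
    exact measurable_const.mul ((measurable_neg.exp).mul (measurable_id'.pow measurable_const))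
  have step2 : ∑' t : ℕ, ENNReal.ofReal (a t)
      = ∫⁻ u in Ioi (0:ℝ),
          ∑' t : ℕ, ENNReal.ofReal (z ^ t / t.factorial * (exp (-u) * u ^ (d + t - 1))) := by
    simp_rw [step1]
    exact (MeasureTheory.lintegral_tsum meas).symm
  -- pointwise evaluation of the sum
  have step3 : ∀ u : ℝ, u ∈ Ioi (0:ℝ) →
      (∑' t : ℕ, ENNReal.ofReal (z ^ t / t.factorial * (exp (-u) * u ^ (d + t - 1))))
        = ENNReal.ofReal (u ^ (d - 1) * exp (-((1 - z) * u))) := by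
    intro u hu
    have hu0 : (0:ℝ) < u := hu
    have hsum : HasSum (fun t : ℕ => z ^ t / t.factorial * (exp (-u) * u ^ (d + t - 1)))
        (u ^ (d - 1) * exp (-((1 - z) * u))) := by
      have hexp : HasSum (fun t : ℕ => (z*u) ^ t / t.factorial) (Real.exp (z*u)) := by
        rw [Real.exp_eq_exp_ℝ]
        exact NormedSpace.expSeries_div_hasSum_exp (z*u)
      have h0 := hexp.mul_left (exp (-u) * u ^ (d - 1))
      have heq : (fun t : ℕ => exp (-u) * u ^ (d - 1) * ((z*u) ^ t / t.factorial))
          = fun t : ℕ => z ^ t / t.factorial * (exp (-u) * u ^ (d + t - 1)) := by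
        funext t
        have hut : u ^ (d + (t:ℝ) - 1) = u ^ (d-1) * u ^ (t:ℕ) := by
          rw [show d + (t:ℝ) - 1 = (d-1) + (t:ℝ) by ring, Real.rpow_add hu0, Real.rpow_natCast]
        rw [mul_pow, hut]; ring
      have hval : exp (-u) * u ^ (d - 1) * exp (z*u) = u ^ (d - 1) * exp (-((1 - z) * u)) := by
        rw [show -((1-z)*u) = -u + z*u by ring, Real.exp_add]; ring
      rw [heq, hval] at h0
      exact h0
    rw [← hsum.tsum_eq]
    refine (ENNReal.ofReal_tsum_of_nonneg (fun t => ?_) hsum.summable).symm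
    exact mul_nonneg (div_nonneg (pow_nonneg hz0 t) (Nat.cast_nonneg _))
      (mul_nonneg (Real.exp_pos _).le (Real.rpow_nonneg hu0.le _))
  have step3' : ∫⁻ u in Ioi (0:ℝ),
      ∑' t : ℕ, ENNReal.ofReal (z ^ t / t.factorial * (exp (-u) * u ^ (d + t - 1)))
      = ∫⁻ u in Ioi (0:ℝ), ENNReal.ofReal (u ^ (d - 1) * exp (-((1 - z) * u))) :=
    setLIntegral_congr_fun measurableSet_Ioi step3
  -- evaluate the remaining integral
  have hintg : IntegrableOn (fun u : ℝ => u ^ (d - 1) * exp (-((1 - z) * u))) (Ioi 0) := by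
    have h0 : IntegrableOn (fun u : ℝ => exp (-((1-z) * u)) * ((1-z) * u) ^ (d - 1)) (Ioi 0) := by
      have := (integrableOn_Ioi_comp_mul_left_iff
        (fun x : ℝ => exp (-x) * x ^ (d - 1)) 0 h1z).mpr ?_
      · simpa using this
      · rw [mul_zero]; exact Real.GammaIntegral_convergent hd
    have h1 := h0.const_mul ((1-z) ^ (1 - d))
    refine MeasureTheory.IntegrableOn.congr_fun h1 (fun u hu => ?_) measurableSet_Ioi
    have hu0 : (0:ℝ) < u := hu
    rw [Real.mul_rpow h1z.le hu0.le, show (1:ℝ) - d = -(d-1) by ring,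
      Real.rpow_neg h1z.le]
    field_simp
  have step4 : ∫⁻ u in Ioi (0:ℝ), ENNReal.ofReal (u ^ (d - 1) * exp (-((1 - z) * u)))
      = ENNReal.ofReal ((1/(1-z)) ^ d * Real.Gamma d) := by
    rw [← Real.integral_rpow_mul_exp_neg_mul_Ioi hd h1z]
    refine (MeasureTheory.ofReal_integral_eq_lintegral_ofReal hintg ?_).symm
    filter_upwards [ae_restrict_mem measurableSet_Ioi] with u hu
    have hu0 : (0:ℝ) < u := hu
    positivity
  have key : ∑' t : ℕ, ENNReal.ofReal (a t)
      = ENNReal.ofReal ((1/(1-z)) ^ d * Real.Gamma d) := by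
    rw [step2, step3', step4]
  -- back to real numbers
  have hsummable : Summable a := by
    have hne : ∑' t : ℕ, ENNReal.ofReal (a t) ≠ ⊤ := by rw [key]; exact ENNReal.ofReal_ne_top
    have := ENNReal.summable_toReal hne
    simpa [ENNReal.toReal_ofReal, hanonneg] using this
  have htsum : ∑' t, a t = (1/(1-z)) ^ d * Real.Gamma d := by
    have h1 := ENNReal.ofReal_tsum_of_nonneg hanonneg hsummable
    rw [key] at h1
    have hC : (0:ℝ) ≤ (1/(1-z)) ^ d * Real.Gamma d := by
      have := Real.Gamma_pos_of_pos hd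
      positivity
    have := (ENNReal.ofReal_eq_ofReal_iff hC (tsum_nonneg hanonneg)).mp h1.symm
    linarith [this]
  have hA : HasSum a ((1/(1-z)) ^ d * Real.Gamma d) := htsum ▸ hsummable.hasSum
  have hGd : (0:ℝ) < Real.Gamma d := Real.Gamma_pos_of_pos hd
  have hfun : (fun t : ℕ => (ascPochhammer ℝ t).eval d / t.factorial * z ^ t)
      = fun t => (Real.Gamma d)⁻¹ * a t := by
    funext t
    have ht : ((t.factorial : ℕ) : ℝ) ≠ 0 := by positivity
    rw [ha]
    simp only
    rw [gamma_poch hd t]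
    field_simp
  have hval2 : (Real.Gamma d)⁻¹ * ((1/(1-z)) ^ d * Real.Gamma d) = (1 - z) ^ (-d) := by
    rw [one_div, Real.inv_rpow h1z.le, ← Real.rpow_neg h1z.le]
    field_simp
  rw [hfun, ← hval2]
  exact hA.mul_left _



lemma beta_lintegral {u v : ℝ} (hu : 0 < u) (hv : 0 < v) :
    ∫⁻ x in Set.Ioo (0:ℝ) 1, ENNReal.ofReal (x ^ (u - 1) * (1 - x) ^ (v - 1))
      = ENNReal.ofReal (Real.Gamma u * Real.Gamma v / Real.Gamma (u + v)) := by
  rw [← beta_integral_eq hu hv]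
  refine (MeasureTheory.ofReal_integral_eq_lintegral_ofReal (beta_integrableOn hu hv) ?_).symm
  filter_upwards [ae_restrict_mem measurableSet_Ioo] with x hx
  exact mul_nonneg (Real.rpow_nonneg hx.1.le _)
    (Real.rpow_nonneg (by linarith [hx.2] : (0:ℝ) ≤ 1 - x) _)

lemma meas_beta (u v : ℝ) :
    Measurable (fun x : ℝ => x ^ (u - 1) * (1 - x) ^ (v - 1)) :=
  (measurable_id'.pow_const _).mul ((measurable_const.sub measurable_id').pow_const _)

lemma prod_lintegral_beta {u1 v1 u2 v2 : ℝ} (hu1 : 0 < u1) (hv1 : 0 < v1)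
    (hu2 : 0 < u2) (hv2 : 0 < v2) :
    ∫⁻ p in Set.Ioo (0:ℝ) 1 ×ˢ Set.Ioo (0:ℝ) 1,
        ENNReal.ofReal (p.1 ^ (u1 - 1) * (1 - p.1) ^ (v1 - 1)) *
        ENNReal.ofReal (p.2 ^ (u2 - 1) * (1 - p.2) ^ (v2 - 1))
      = ENNReal.ofReal (Real.Gamma u1 * Real.Gamma v1 / Real.Gamma (u1 + v1)) *
        ENNReal.ofReal (Real.Gamma u2 * Real.Gamma v2 / Real.Gamma (u2 + v2)) := by
  rw [Measure.volume_eq_prod, ← Measure.prod_restrict,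
    lintegral_prod_mul ((meas_beta u1 v1).ennreal_ofReal.aemeasurable)
      ((meas_beta u2 v2).ennreal_ofReal.aemeasurable),
    beta_lintegral hu1 hv1, beta_lintegral hu2 hv2]

set_option maxHeartbeats 2000000 in
theorem stmt_15 (a b c r s : ℝ) (ha : 0 < a) (hb : 0 < b) (hc : 0 < c)
    (hr : 0 ≤ r) (hs : 0 ≤ s) :
    ∫ p in Set.Ioo (0 : ℝ) 1 ×ˢ Set.Ioo (0 : ℝ) 1,
        p.1 ^ r * p.2 ^ s *
          (p.1 ^ (a - 1) * p.2 ^ (b - 1) * (1 - p.1) ^ (b + c - 1) * (1 - p.2) ^ (a + c - 1) *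
            (1 - p.1 * p.2) ^ (-(a + b + c)) /
            (Real.Gamma a * Real.Gamma b * Real.Gamma c / Real.Gamma (a + b + c))) =
      (Real.Gamma (a + r) * Real.Gamma (b + c) / Real.Gamma (a + r + b + c)) *
          (Real.Gamma (b + s) * Real.Gamma (a + c) / Real.Gamma (b + s + a + c)) /
          (Real.Gamma a * Real.Gamma b * Real.Gamma c / Real.Gamma (a + b + c)) *
        ∑' t : ℕ,
          ((ascPochhammer ℝ t).eval (a + r) * (ascPochhammer ℝ t).eval (b + s) *
              (ascPochhammer ℝ t).eval (a + b + c)) /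
            ((ascPochhammer ℝ t).eval (a + b + c + r) * (ascPochhammer ℝ t).eval (a + b + c + s) *
              (t.factorial : ℝ)) := by
  have hd : (0:ℝ) < a + b + c := by linarith
  have hA : (0:ℝ) < a + r := by linarith
  have hB : (0:ℝ) < b + s := by linarith
  have hbc : (0:ℝ) < b + c := by linarith
  have hac : (0:ℝ) < a + c := by linarith
  have hAbc : (0:ℝ) < a + r + b + c := by linarith
  have hBac : (0:ℝ) < b + s + a + c := by linarith
  set β : ℝ := Real.Gamma a * Real.Gamma b * Real.Gamma c / Real.Gamma (a + b + c) with hβ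
  have hβpos : 0 < β := by
    rw [hβ]
    have := Real.Gamma_pos_of_pos ha
    have := Real.Gamma_pos_of_pos hb
    have := Real.Gamma_pos_of_pos hc
    have := Real.Gamma_pos_of_pos hd
    positivity
  set S : Set (ℝ × ℝ) := Set.Ioo (0:ℝ) 1 ×ˢ Set.Ioo (0:ℝ) 1 with hSdef
  have hSmeas : MeasurableSet S := measurableSet_Ioo.prod measurableSet_Ioo
  set H : ℝ × ℝ → ℝ := fun p =>
    (p.1 ^ (a + r - 1) * (1 - p.1) ^ (b + c - 1)) *
    ((p.2 ^ (b + s - 1) * (1 - p.2) ^ (a + c - 1)) * (1 - p.1 * p.2) ^ (-(a + b + c))) with hH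
  have mH : Measurable H :=
    ((measurable_fst.pow_const _).mul ((measurable_const.sub measurable_fst).pow_const _)).mul
      (((measurable_snd.pow_const _).mul
        ((measurable_const.sub measurable_snd).pow_const _)).mul
        ((measurable_const.sub (measurable_fst.mul measurable_snd)).pow_const _))
  -- membership unpacking
  have hmem : ∀ p : ℝ × ℝ, p ∈ S → 0 < p.1 ∧ p.1 < 1 ∧ 0 < p.2 ∧ p.2 < 1 ∧
      0 ≤ p.1 * p.2 ∧ p.1 * p.2 < 1 := by
    intro p hp
    rw [hSdef, Set.mem_prod] at hp
    obtain ⟨⟨hx0, hx1⟩, ⟨hy0, hy1⟩⟩ := hp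
    refine ⟨hx0, hx1, hy0, hy1, by positivity, ?_⟩
    nlinarith
  -- Step A : rewrite the integrand
  have stepA : (∫ p in S,
        p.1 ^ r * p.2 ^ s *
          (p.1 ^ (a - 1) * p.2 ^ (b - 1) * (1 - p.1) ^ (b + c - 1) * (1 - p.2) ^ (a + c - 1) *
            (1 - p.1 * p.2) ^ (-(a + b + c)) / β))
      = (∫ p in S, H p) / β := by
    rw [← integral_div]
    refine setIntegral_congr_fun hSmeas (fun p hp => ?_)
    obtain ⟨hx0, hx1, hy0, hy1, hxy0, hxy1⟩ := hmem p hp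
    have e1 : p.1 ^ (a + r - 1) = p.1 ^ r * p.1 ^ (a - 1) := by
      rw [show a + r - 1 = r + (a - 1) by ring, Real.rpow_add hx0]
    have e2 : p.2 ^ (b + s - 1) = p.2 ^ s * p.2 ^ (b - 1) := by
      rw [show b + s - 1 = s + (b - 1) by ring, Real.rpow_add hy0]
    rw [hH]
    simp only
    rw [e1, e2]
    ring
  -- the term functions
  set T : ℕ → ℝ × ℝ → ℝ := fun t p =>
    (ascPochhammer ℝ t).eval (a + b + c) / t.factorial *
      ((p.1 ^ (a + r + t - 1) * (1 - p.1) ^ (b + c - 1)) *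
       (p.2 ^ (b + s + t - 1) * (1 - p.2) ^ (a + c - 1))) with hT
  have mT : ∀ t : ℕ, Measurable (T t) := by
    intro t
    exact measurable_const.mul
      (((measurable_fst.pow_const _).mul
          ((measurable_const.sub measurable_fst).pow_const _)).mul
        ((measurable_snd.pow_const _).mul
          ((measurable_const.sub measurable_snd).pow_const _)))
  have hTnonneg : ∀ (t : ℕ) (p : ℝ × ℝ), p ∈ S → 0 ≤ T t p := by
    intro t p hp
    obtain ⟨hx0, hx1, hy0, hy1, hxy0, hxy1⟩ := hmem p hp
    rw [hT]
    simp only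
    have hP := poch_pos hd t
    have h1 := Real.rpow_nonneg hx0.le (a + r + t - 1)
    have h2 := Real.rpow_nonneg (by linarith : (0:ℝ) ≤ 1 - p.1) (b + c - 1)
    have h3 := Real.rpow_nonneg hy0.le (b + s + t - 1)
    have h4 := Real.rpow_nonneg (by linarith : (0:ℝ) ≤ 1 - p.2) (a + c - 1)
    positivity
  -- Step B1 : pointwise expansion
  have stepB1 : ∀ p ∈ S, HasSum (fun t => T t p) (H p) := by
    intro p hp
    obtain ⟨hx0, hx1, hy0, hy1, hxy0, hxy1⟩ := hmem p hp
    have h0 := (binomial_hasSum hd hxy0 hxy1).mul_left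
      ((p.1 ^ (a + r - 1) * (1 - p.1) ^ (b + c - 1)) *
       (p.2 ^ (b + s - 1) * (1 - p.2) ^ (a + c - 1)))
    have heq : (fun t : ℕ =>
        (p.1 ^ (a + r - 1) * (1 - p.1) ^ (b + c - 1)) *
          (p.2 ^ (b + s - 1) * (1 - p.2) ^ (a + c - 1)) *
          ((ascPochhammer ℝ t).eval (a+b+c) / t.factorial * (p.1 * p.2) ^ t))
        = fun t => T t p := by
      funext t
      have ex : p.1 ^ (a + r + (t:ℝ) - 1) = p.1 ^ (a + r - 1) * p.1 ^ (t:ℕ) := by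
        rw [show a + r + (t:ℝ) - 1 = (a + r - 1) + (t:ℝ) by ring, Real.rpow_add hx0,
          Real.rpow_natCast]
      have ey : p.2 ^ (b + s + (t:ℝ) - 1) = p.2 ^ (b + s - 1) * p.2 ^ (t:ℕ) := by
        rw [show b + s + (t:ℝ) - 1 = (b + s - 1) + (t:ℝ) by ring, Real.rpow_add hy0,
          Real.rpow_natCast]
      rw [hT]
      simp only
      rw [ex, ey, mul_pow]
      ring
    have hvalue : (p.1 ^ (a + r - 1) * (1 - p.1) ^ (b + c - 1)) *
        (p.2 ^ (b + s - 1) * (1 - p.2) ^ (a + c - 1)) * (1 - p.1 * p.2) ^ (-(a+b+c))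
        = H p := by
      rw [hH]; ring
    rw [heq, hvalue] at h0
    exact h0
  -- the coefficient sequence
  set C : ℕ → ℝ := fun t =>
    (ascPochhammer ℝ t).eval (a + b + c) / t.factorial *
      ((Real.Gamma (a + r + t) * Real.Gamma (b + c) / Real.Gamma (a + r + t + (b + c))) *
       (Real.Gamma (b + s + t) * Real.Gamma (a + c) / Real.Gamma (b + s + t + (a + c)))) with hC
  have hCnonneg : ∀ t, 0 ≤ C t := by
    intro t
    have h1 := Real.Gamma_pos_of_pos (show (0:ℝ) < a + r + t by positivity)
    have h2 := Real.Gamma_pos_of_pos hbc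
    have h3 := Real.Gamma_pos_of_pos (show (0:ℝ) < a + r + t + (b + c) by positivity)
    have h4 := Real.Gamma_pos_of_pos (show (0:ℝ) < b + s + t by positivity)
    have h5 := Real.Gamma_pos_of_pos hac
    have h6 := Real.Gamma_pos_of_pos (show (0:ℝ) < b + s + t + (a + c) by positivity)
    have hP := poch_pos hd t
    rw [hC]
    positivity
  -- Step B3 : lintegral of each term
  have stepB3 : ∀ t : ℕ, ∫⁻ p in S, ENNReal.ofReal (T t p) = ENNReal.ofReal (C t) := by
    intro t
    have hPt : (0:ℝ) ≤ (ascPochhammer ℝ t).eval (a + b + c) / t.factorial :=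
      le_of_lt (by have := poch_pos hd t; positivity)
    have split : ∀ p ∈ S, ENNReal.ofReal (T t p)
        = ENNReal.ofReal ((ascPochhammer ℝ t).eval (a + b + c) / t.factorial) *
          (ENNReal.ofReal (p.1 ^ (a + r + t - 1) * (1 - p.1) ^ (b + c - 1)) *
           ENNReal.ofReal (p.2 ^ (b + s + t - 1) * (1 - p.2) ^ (a + c - 1))) := by
      intro p hp
      obtain ⟨hx0, hx1, hy0, hy1, hxy0, hxy1⟩ := hmem p hp
      rw [hT]
      simp only
      rw [ENNReal.ofReal_mul hPt, ENNReal.ofReal_mul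
        (mul_nonneg (Real.rpow_nonneg hx0.le _)
          (Real.rpow_nonneg (by linarith : (0:ℝ) ≤ 1 - p.1) _))]
    rw [setLIntegral_congr_fun hSmeas split,
      lintegral_const_mul' _ _ ENNReal.ofReal_ne_top]
    have hbeta := prod_lintegral_beta (u1 := a + r + t) (v1 := b + c)
      (u2 := b + s + t) (v2 := a + c) (by positivity) hbc (by positivity) hac
    rw [← hSdef] at hbeta
    rw [hbeta, hC]
    rw [ENNReal.ofReal_mul hPt, ENNReal.ofReal_mul
      (by
        have h1 := Real.Gamma_pos_of_pos (show (0:ℝ) < a + r + t by positivity)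
        have h2 := Real.Gamma_pos_of_pos hbc
        have h3 := Real.Gamma_pos_of_pos (show (0:ℝ) < a + r + t + (b + c) by positivity)
        positivity)]
  -- Step B2 : swap sum and integral
  have stepB2 : ∫⁻ p in S, ENNReal.ofReal (H p) = ∑' t : ℕ, ENNReal.ofReal (C t) := by
    have h1 : ∫⁻ p in S, ENNReal.ofReal (H p)
        = ∫⁻ p in S, ∑' t : ℕ, ENNReal.ofReal (T t p) := by
      refine setLIntegral_congr_fun hSmeas (fun p hp => ?_)
      have hsum := stepB1 p hp
      rw [← hsum.tsum_eq]
      exact ENNReal.ofReal_tsum_of_nonneg (fun t => hTnonneg t p hp) hsum.summable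
    rw [h1, lintegral_tsum (fun t => (mT t).ennreal_ofReal.aemeasurable)]
    exact tsum_congr stepB3
  -- Step B4 : finiteness
  have stepB4 : ∫⁻ p in S, ENNReal.ofReal (H p) ≠ ⊤ := by
    set bnd : ℝ × ℝ → ℝ := fun p =>
      (p.1 ^ (a + r - 1) * (1 - p.1) ^ (c/2 - 1)) *
      (p.2 ^ (b + s - 1) * (1 - p.2) ^ (c/2 - 1)) with hbnd
    have hle : ∀ p ∈ S, ENNReal.ofReal (H p)
        ≤ ENNReal.ofReal (p.1 ^ (a + r - 1) * (1 - p.1) ^ (c/2 - 1)) *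
          ENNReal.ofReal (p.2 ^ (b + s - 1) * (1 - p.2) ^ (c/2 - 1)) := by
      intro p hp
      obtain ⟨hx0, hx1, hy0, hy1, hxy0, hxy1⟩ := hmem p hp
      have h1x : (0:ℝ) < 1 - p.1 := by linarith
      have h1y : (0:ℝ) < 1 - p.2 := by linarith
      have h1xy : (0:ℝ) < 1 - p.1 * p.2 := by linarith
      rw [← ENNReal.ofReal_mul (mul_nonneg (Real.rpow_nonneg hx0.le _)
        (Real.rpow_nonneg h1x.le _))]
      refine ENNReal.ofReal_le_ofReal ?_
      have hsplit : H p = (p.1 ^ (a + r - 1) *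
          ((1 - p.1) ^ (b + c - 1) * (1 - p.1 * p.2) ^ (-(b + c/2)))) *
          (p.2 ^ (b + s - 1) *
          ((1 - p.2) ^ (a + c - 1) * (1 - p.1 * p.2) ^ (-(a + c/2)))) := by
        rw [hH]
        simp only
        rw [show -(a+b+c) = -(b + c/2) + -(a + c/2) by ring, Real.rpow_add h1xy]
        ring
      have hk1 : (1 - p.1 * p.2) ^ (-(b + c/2)) ≤ (1 - p.1) ^ (-(b + c/2)) := by
        refine Real.rpow_le_rpow_of_nonpos h1x (by nlinarith) (by linarith)
      have hk2 : (1 - p.1 * p.2) ^ (-(a + c/2)) ≤ (1 - p.2) ^ (-(a + c/2)) := by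
        refine Real.rpow_le_rpow_of_nonpos h1y (by nlinarith) (by linarith)
      have he1 : (1 - p.1) ^ (b + c - 1) * (1 - p.1) ^ (-(b + c/2)) = (1 - p.1) ^ (c/2 - 1) := by
        rw [← Real.rpow_add h1x, show b + c - 1 + -(b + c/2) = c/2 - 1 by ring]
      have he2 : (1 - p.2) ^ (a + c - 1) * (1 - p.2) ^ (-(a + c/2)) = (1 - p.2) ^ (c/2 - 1) := by
        rw [← Real.rpow_add h1y, show a + c - 1 + -(a + c/2) = c/2 - 1 by ring]
      rw [hsplit, ← he1, ← he2]
      have hb1 : (1 - p.1) ^ (b + c - 1) * (1 - p.1 * p.2) ^ (-(b + c/2))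
          ≤ (1 - p.1) ^ (b + c - 1) * (1 - p.1) ^ (-(b + c/2)) :=
        mul_le_mul_of_nonneg_left hk1 (Real.rpow_nonneg h1x.le _)
      have hb2 : (1 - p.2) ^ (a + c - 1) * (1 - p.1 * p.2) ^ (-(a + c/2))
          ≤ (1 - p.2) ^ (a + c - 1) * (1 - p.2) ^ (-(a + c/2)) :=
        mul_le_mul_of_nonneg_left hk2 (Real.rpow_nonneg h1y.le _)
      have hf1 : (0:ℝ) ≤ p.1 ^ (a + r - 1) := Real.rpow_nonneg hx0.le _
      have hf2 : (0:ℝ) ≤ p.2 ^ (b + s - 1) := Real.rpow_nonneg hy0.le _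
      refine mul_le_mul (mul_le_mul_of_nonneg_left hb1 hf1)
        (mul_le_mul_of_nonneg_left hb2 hf2)
        (mul_nonneg hf2 (mul_nonneg (Real.rpow_nonneg h1y.le _)
          (Real.rpow_nonneg h1xy.le _)))
        (mul_nonneg hf1 (mul_nonneg (Real.rpow_nonneg h1x.le _)
          (Real.rpow_nonneg h1x.le _)))
    have hmono := setLIntegral_mono (μ := volume) (s := S)
      (f := fun p => ENNReal.ofReal (H p))
      (g := fun p => ENNReal.ofReal (p.1 ^ (a + r - 1) * (1 - p.1) ^ (c/2 - 1)) *
        ENNReal.ofReal (p.2 ^ (b + s - 1) * (1 - p.2) ^ (c/2 - 1)))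
      (((meas_beta (a+r) (c/2)).comp measurable_fst).ennreal_ofReal.mul
        (((meas_beta (b+s) (c/2)).comp measurable_snd).ennreal_ofReal)) hle
    have hbeta := prod_lintegral_beta (u1 := a + r) (v1 := c/2)
      (u2 := b + s) (v2 := c/2) hA (by linarith) hB (by linarith)
    rw [← hSdef] at hbeta
    rw [hbeta] at hmono
    exact ne_top_of_le_ne_top (ENNReal.mul_ne_top ENNReal.ofReal_ne_top
      ENNReal.ofReal_ne_top) hmono
  -- Step B5 : the real integral equals the sum of C
  have hCsummable : Summable C := by
    have hne : ∑' t : ℕ, ENNReal.ofReal (C t) ≠ ⊤ := stepB2 ▸ stepB4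
    have := ENNReal.summable_toReal hne
    simpa [ENNReal.toReal_ofReal, hCnonneg] using this
  have stepB5 : ∫ p in S, H p = ∑' t : ℕ, C t := by
    have hnn : 0 ≤ᵐ[volume.restrict S] H := by
      filter_upwards [ae_restrict_mem hSmeas] with p hp
      obtain ⟨hx0, hx1, hy0, hy1, hxy0, hxy1⟩ := hmem p hp
      rw [hH]
      simp only
      have h1 := Real.rpow_nonneg hx0.le (a + r - 1)
      have h2 := Real.rpow_nonneg (by linarith : (0:ℝ) ≤ 1 - p.1) (b + c - 1)
      have h3 := Real.rpow_nonneg hy0.le (b + s - 1)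
      have h4 := Real.rpow_nonneg (by linarith : (0:ℝ) ≤ 1 - p.2) (a + c - 1)
      have h5 := Real.rpow_nonneg (by linarith : (0:ℝ) ≤ 1 - p.1 * p.2) (-(a+b+c))
      positivity
    rw [integral_eq_lintegral_of_nonneg_ae hnn mH.aestronglyMeasurable, stepB2,
      ENNReal.tsum_toReal_eq (fun t => ENNReal.ofReal_ne_top)]
    exact tsum_congr (fun t => ENNReal.toReal_ofReal (hCnonneg t))
  -- Step C : identify the coefficients
  have hcw : ∀ t : ℕ, C t =
      ((Real.Gamma (a + r) * Real.Gamma (b + c) / Real.Gamma (a + r + b + c)) *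
       (Real.Gamma (b + s) * Real.Gamma (a + c) / Real.Gamma (b + s + a + c))) *
      (((ascPochhammer ℝ t).eval (a + r) * (ascPochhammer ℝ t).eval (b + s) *
          (ascPochhammer ℝ t).eval (a + b + c)) /
        ((ascPochhammer ℝ t).eval (a + b + c + r) * (ascPochhammer ℝ t).eval (a + b + c + s) *
          (t.factorial : ℝ))) := by
    intro t
    have g1 : Real.Gamma (a + r + t) = Real.Gamma (a + r) * (ascPochhammer ℝ t).eval (a + r) :=
      gamma_poch hA t
    have g2 : Real.Gamma (b + s + t) = Real.Gamma (b + s) * (ascPochhammer ℝ t).eval (b + s) :=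
      gamma_poch hB t
    have g3 : Real.Gamma (a + r + t + (b + c))
        = Real.Gamma (a + r + b + c) * (ascPochhammer ℝ t).eval (a + r + b + c) := by
      rw [show a + r + (t:ℝ) + (b + c) = (a + r + b + c) + (t:ℝ) by ring]
      exact gamma_poch hAbc t
    have g4 : Real.Gamma (b + s + t + (a + c))
        = Real.Gamma (b + s + a + c) * (ascPochhammer ℝ t).eval (b + s + a + c) := by
      rw [show b + s + (t:ℝ) + (a + c) = (b + s + a + c) + (t:ℝ) by ring]
      exact gamma_poch hBac t
    have a1 : (ascPochhammer ℝ t).eval (a + b + c + r) = (ascPochhammer ℝ t).eval (a + r + b + c) := by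
      rw [show a + b + c + r = a + r + b + c by ring]
    have a2 : (ascPochhammer ℝ t).eval (a + b + c + s) = (ascPochhammer ℝ t).eval (b + s + a + c) := by
      rw [show a + b + c + s = b + s + a + c by ring]
    have p1 := poch_pos hA t
    have p2 := poch_pos hB t
    have p3 := poch_pos hd t
    have p4 := poch_pos hAbc t
    have p5 := poch_pos hBac t
    have q1 := Real.Gamma_pos_of_pos hAbc
    have q2 := Real.Gamma_pos_of_pos hBac
    have hfact : (0:ℝ) < (t.factorial : ℝ) := by positivity
    rw [hC]
    simp only
    rw [g1, g2, g3, g4, a1, a2]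
    field_simp
  -- put everything together
  rw [hβ] at stepA
  rw [stepA, stepB5]
  rw [tsum_congr hcw, tsum_mul_left]
  ring
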